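/- Fix real numbers ξ, θ, θ⁻ with θ⁻ ≠ θ, and 0 < σ_min < σ_max. With σᵢ = σ_min + ((i−1)/(N−1))·(σ_max − σ_min), Dᵢᴺ(θ, θ⁻) = (σ_min/σᵢ₊₁)ξ + (1 − σ_min/σᵢ₊₁)θ − (σ_min/σᵢ)ξ − (1 − σ_min/σᵢ)θ⁻, and Gᴺ(θ, θ⁻) = (2/(N−1))·Σ_{i=1}^{N−1} Dᵢᴺ(θ, θ⁻)·(1 − σ_min/σᵢ₊₁), the unscaled gradient satisfies lim_{N→∞} Gᴺ(θ, θ⁻) = (2(θ − θ⁻)/(σ_max − σ_min)) · ∫_{σ_min}^{σ_max} (1 − σ_min/σ)² dσ, which is nonzero. -/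

import Mathlib

open Filter Finset

namespace CMaux

/-- Partition point: `a + (k/(n+1))(b-a)`. -/
noncomputable def pt (a b : ℝ) (n k : ℕ) : ℝ := a + ((k : ℝ) / ((n : ℝ) + 1)) * (b - a)

variable {a b : ℝ}

lemma npos (n : ℕ) : (0:ℝ) < (n:ℝ) + 1 := by positivity

lemma pt_zero (n : ℕ) : pt a b n 0 = a := by simp [pt]

lemma pt_last (n : ℕ) : pt a b n (n+1) = b := by
  have h := (npos n).ne'
  simp [pt, h]

lemma pt_step (n k : ℕ) : pt a b n (k+1) - pt a b n k = (b - a) / ((n:ℝ)+1) := by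
  have h := (npos n).ne'
  unfold pt
  push_cast
  field_simp
  ring

lemma pt_mono (h1 : a ≤ b) {n k l : ℕ} (hkl : k ≤ l) : pt a b n k ≤ pt a b n l := by
  have : ((k:ℝ)) ≤ (l:ℝ) := by exact_mod_cast hkl
  have hq : (k:ℝ)/((n:ℝ)+1) ≤ (l:ℝ)/((n:ℝ)+1) := by
    gcongr
  unfold pt
  nlinarith [mul_le_mul_of_nonneg_right hq (sub_nonneg.2 h1)]

lemma pt_ge (h1 : a ≤ b) (n k : ℕ) : a ≤ pt a b n k := by
  have := pt_mono (a := a) (b := b) (n := n) h1 (Nat.zero_le k)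
  rwa [pt_zero] at this

lemma pt_le (h1 : a ≤ b) {n k : ℕ} (hk : k ≤ n + 1) : pt a b n k ≤ b := by
  have := pt_mono (a := a) (b := b) (n := n) h1 hk
  rwa [pt_last] at this

lemma pt_pos (h0 : 0 < a) (h1 : a ≤ b) (n k : ℕ) : 0 < pt a b n k :=
  lt_of_lt_of_le h0 (pt_ge h1 n k)

/-- `g s = 1 - a/s`. -/
lemma g_nonneg (h0 : 0 < a) {s : ℝ} (hs : a ≤ s) : 0 ≤ 1 - a / s := by
  have hspos : 0 < s := lt_of_lt_of_le h0 hs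
  have : a / s ≤ 1 := (div_le_one hspos).2 hs
  linarith

lemma g_le_one (h0 : 0 < a) {s : ℝ} (hs : a ≤ s) : 1 - a / s ≤ 1 := by
  have hspos : 0 < s := lt_of_lt_of_le h0 hs
  have : 0 ≤ a / s := by positivity
  linarith

lemma g_mono (h0 : 0 < a) {s t : ℝ} (hs : a ≤ s) (hst : s ≤ t) :
    1 - a / s ≤ 1 - a / t := by
  have hspos : 0 < s := lt_of_lt_of_le h0 hs
  have : a / t ≤ a / s := div_le_div_of_nonneg_left h0.le hspos hst
  linarith


lemma g_sq_intble (h0 : 0 < a) {u v : ℝ} (hu : a ≤ u) (hv : a ≤ v) :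
    IntervalIntegrable (fun s => (1 - a/s)^2) MeasureTheory.volume u v := by
  apply ContinuousOn.intervalIntegrable
  apply ContinuousOn.pow
  apply ContinuousOn.sub continuousOn_const
  apply ContinuousOn.div continuousOn_const continuousOn_id
  intro x hx
  have hax : a ≤ x := le_trans (le_min hu hv) hx.1
  exact (lt_of_lt_of_le h0 hax).ne'

lemma interval_lb (h0 : 0 < a) (h1 : a ≤ b) {n k : ℕ} (hk : k < n + 1) :
    ((b-a)/((n:ℝ)+1)) * (1 - a / pt a b n k)^2
      ≤ ∫ s in pt a b n k..pt a b n (k+1), (1 - a/s)^2 := by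
  have hu : a ≤ pt a b n k := pt_ge h1 n k
  have hv : a ≤ pt a b n (k+1) := pt_ge h1 n (k+1)
  have huv : pt a b n k ≤ pt a b n (k+1) := pt_mono h1 (Nat.le_succ k)
  have hstep := pt_step (a := a) (b := b) n k
  have hmono : ∀ x ∈ Set.Icc (pt a b n k) (pt a b n (k+1)),
      (fun _ : ℝ => (1 - a / pt a b n k)^2) x ≤ (1 - a/x)^2 := by
    intro x hx
    exact pow_le_pow_left₀ (g_nonneg h0 hu) (g_mono h0 hu hx.1) 2
  have := intervalIntegral.integral_mono_on huv (intervalIntegrable_const)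
    (g_sq_intble h0 hu hv) hmono
  rwa [intervalIntegral.integral_const, smul_eq_mul, hstep] at this

lemma interval_ub (h0 : 0 < a) (h1 : a ≤ b) {n k : ℕ} (hk : k < n + 1) :
    (∫ s in pt a b n k..pt a b n (k+1), (1 - a/s)^2)
      ≤ ((b-a)/((n:ℝ)+1)) * (1 - a / pt a b n (k+1))^2 := by
  have hu : a ≤ pt a b n k := pt_ge h1 n k
  have hv : a ≤ pt a b n (k+1) := pt_ge h1 n (k+1)
  have huv : pt a b n k ≤ pt a b n (k+1) := pt_mono h1 (Nat.le_succ k)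
  have hstep := pt_step (a := a) (b := b) n k
  have hmono : ∀ x ∈ Set.Icc (pt a b n k) (pt a b n (k+1)),
      (1 - a/x)^2 ≤ (fun _ : ℝ => (1 - a / pt a b n (k+1))^2) x := by
    intro x hx
    exact pow_le_pow_left₀ (g_nonneg h0 (hu.trans hx.1)) (g_mono h0 (hu.trans hx.1) hx.2) 2
  have := intervalIntegral.integral_mono_on huv (g_sq_intble h0 hu hv)
    (intervalIntegrable_const) hmono
  rwa [intervalIntegral.integral_const, smul_eq_mul, hstep] at this

lemma integral_eq_sum (h0 : 0 < a) (h1 : a ≤ b) (n : ℕ) :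
    (∫ s in a..b, (1 - a/s)^2)
      = ∑ k ∈ range (n+1), ∫ s in pt a b n k..pt a b n (k+1), (1 - a/s)^2 := by
  rw [intervalIntegral.sum_integral_adjacent_intervals
    (fun k _ => g_sq_intble h0 (pt_ge h1 n k) (pt_ge h1 n (k+1))), pt_zero, pt_last]

lemma riemann_tendsto (h0 : 0 < a) (h1 : a < b) :
    Tendsto (fun n : ℕ => ((b-a)/((n:ℝ)+1)) * ∑ k ∈ range (n+1),
      (1 - a / pt a b n k) * (1 - a / pt a b n (k+1))) atTop
      (nhds (∫ s in a..b, (1 - a/s)^2)) := by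
  set I : ℝ := ∫ s in a..b, (1 - a/s)^2 with hI
  set d : ℕ → ℝ := fun n => ((b-a)/((n:ℝ)+1)) * (1 - a/b)^2 with hd
  have hΔpos : ∀ n : ℕ, 0 ≤ (b-a)/((n:ℝ)+1) := fun n => div_nonneg (by linarith) (npos n).le
  -- lower and upper sums
  set L : ℕ → ℝ := fun n => ((b-a)/((n:ℝ)+1)) * ∑ k ∈ range (n+1), (1 - a / pt a b n k)^2
  set U : ℕ → ℝ := fun n => ((b-a)/((n:ℝ)+1)) * ∑ k ∈ range (n+1), (1 - a / pt a b n (k+1))^2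
  have hLI : ∀ n : ℕ, L n ≤ I := by
    intro n
    rw [hI, integral_eq_sum h0 h1.le n]
    simp only [L, Finset.mul_sum]
    exact Finset.sum_le_sum fun k hk => interval_lb h0 h1.le (Finset.mem_range.1 hk)
  have hIU : ∀ n : ℕ, I ≤ U n := by
    intro n
    rw [hI, integral_eq_sum h0 h1.le n]
    simp only [U, Finset.mul_sum]
    exact Finset.sum_le_sum fun k hk => interval_ub h0 h1.le (Finset.mem_range.1 hk)
  have hUL : ∀ n : ℕ, U n - L n = d n := by
    intro n
    simp only [U, L, d, ← mul_sub, ← Finset.sum_sub_distrib]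
    rw [Finset.sum_range_sub (fun k => (1 - a / pt a b n k)^2), pt_zero, pt_last]
    have ha : 1 - a / a = 0 := by rw [div_self h0.ne', sub_self]
    rw [ha]
    ring
  have hLS : ∀ n : ℕ, L n ≤ ((b-a)/((n:ℝ)+1)) * ∑ k ∈ range (n+1),
      (1 - a / pt a b n k) * (1 - a / pt a b n (k+1)) := by
    intro n
    apply mul_le_mul_of_nonneg_left _ (hΔpos n)
    apply Finset.sum_le_sum
    intro k _
    have hu := pt_ge (a := a) (b := b) h1.le n k
    have hmon := g_mono h0 hu (pt_mono (a := a) (b := b) h1.le (Nat.le_succ k))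
    rw [sq]
    exact mul_le_mul_of_nonneg_left hmon (g_nonneg h0 hu)
  have hSU : ∀ n : ℕ, ((b-a)/((n:ℝ)+1)) * (∑ k ∈ range (n+1),
      (1 - a / pt a b n k) * (1 - a / pt a b n (k+1))) ≤ U n := by
    intro n
    apply mul_le_mul_of_nonneg_left _ (hΔpos n)
    apply Finset.sum_le_sum
    intro k _
    have hu := pt_ge (a := a) (b := b) h1.le n k
    have hu1 := pt_ge (a := a) (b := b) h1.le n (k+1)
    have hmon := g_mono h0 hu (pt_mono (a := a) (b := b) h1.le (Nat.le_succ k))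
    rw [sq]
    exact mul_le_mul_of_nonneg_right hmon (g_nonneg h0 hu1)
  have hd0 : Tendsto d atTop (nhds 0) := by
    have h1' : Tendsto (fun n : ℕ => (n:ℝ)+1) atTop atTop :=
      tendsto_atTop_add_const_right _ 1 tendsto_natCast_atTop_atTop
    have := Tendsto.div_atTop (tendsto_const_nhds (x := (b-a)*(1 - a/b)^2)) h1'
    convert this using 2 with n
    simp only [d]
    ring
  refine tendsto_of_tendsto_of_tendsto_of_le_of_le (g := fun n => I - d n)
    (h := fun n => I + d n) ?_ ?_ (fun n => ?_) (fun n => ?_)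
  · simpa using tendsto_const_nhds.sub hd0
  · simpa using tendsto_const_nhds.add hd0
  · have := hSU n
    have h2 := hIU n
    have h3 := hUL n
    linarith [hLS n, hLI n]
  · linarith [hSU n, hIU n, hUL n, hLS n, hLI n]


lemma err_tendsto (h0 : 0 < a) (h1 : a < b) (c : ℝ) :
    Tendsto (fun n : ℕ => c * ((2/((n:ℝ)+1)) * ∑ k ∈ range (n+1),
      (a / pt a b n (k+1) - a / pt a b n k) * (1 - a / pt a b n (k+1)))) atTop (nhds 0) := by
  apply squeeze_zero_norm (a := fun n : ℕ => |c| * (2/((n:ℝ)+1)))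
  · intro n
    rw [Real.norm_eq_abs, abs_mul, abs_mul]
    have hsum : |∑ k ∈ range (n+1),
        (a / pt a b n (k+1) - a / pt a b n k) * (1 - a / pt a b n (k+1))| ≤ 1 := by
      calc |∑ k ∈ range (n+1), (a / pt a b n (k+1) - a / pt a b n k) * (1 - a / pt a b n (k+1))|
          ≤ ∑ k ∈ range (n+1), |(a / pt a b n (k+1) - a / pt a b n k) * (1 - a / pt a b n (k+1))| :=
            Finset.abs_sum_le_sum_abs _ _
        _ ≤ ∑ k ∈ range (n+1), (a / pt a b n k - a / pt a b n (k+1)) := by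
            apply Finset.sum_le_sum
            intro k _
            have hu := pt_ge (a := a) (b := b) h1.le n k
            have hu1 := pt_ge (a := a) (b := b) h1.le n (k+1)
            have hp := pt_pos h0 h1.le n k
            have hmono : a / pt a b n (k+1) ≤ a / pt a b n k :=
              div_le_div_of_nonneg_left h0.le hp (pt_mono h1.le (Nat.le_succ k))
            rw [abs_mul, abs_of_nonpos (by linarith), abs_of_nonneg (g_nonneg h0 hu1)]
            calc -(a / pt a b n (k+1) - a / pt a b n k) * (1 - a / pt a b n (k+1))
                ≤ -(a / pt a b n (k+1) - a / pt a b n k) * 1 := by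
                  apply mul_le_mul_of_nonneg_left (g_le_one h0 hu1) (by linarith)
              _ = a / pt a b n k - a / pt a b n (k+1) := by ring
        _ = a / pt a b n 0 - a / pt a b n (n+1) :=
            Finset.sum_range_sub' (fun k => a / pt a b n k) (n+1)
        _ ≤ 1 := by
            rw [pt_zero, pt_last]
            have : 0 ≤ a / b := div_nonneg h0.le (h0.trans h1).le
            have : a / a = 1 := div_self h0.ne'
            linarith
    calc |c| * (|2/((n:ℝ)+1)| * |∑ k ∈ range (n+1),
          (a / pt a b n (k+1) - a / pt a b n k) * (1 - a / pt a b n (k+1))|)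
        ≤ |c| * (|2/((n:ℝ)+1)| * 1) := by
          apply mul_le_mul_of_nonneg_left _ (abs_nonneg c)
          exact mul_le_mul_of_nonneg_left hsum (abs_nonneg _)
      _ = |c| * (2/((n:ℝ)+1)) := by
          rw [mul_one, abs_of_nonneg (div_nonneg two_pos.le (npos n).le)]
  · have h1' : Tendsto (fun n : ℕ => (n:ℝ)+1) atTop atTop :=
      tendsto_atTop_add_const_right _ 1 tendsto_natCast_atTop_atTop
    have := Tendsto.div_atTop (tendsto_const_nhds (x := |c| * 2)) h1'
    convert this using 2 with n
    ring

end CMaux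


/-- The `i`-th noise level of the uniform discretization with `N` steps. -/
noncomputable def sigmaLvl (σmin σmax : ℝ) (N i : ℕ) : ℝ :=
  σmin + (((i : ℝ) - 1) / ((N : ℝ) - 1)) * (σmax - σmin)

/-- The difference `Dᵢᴺ(θ, θ⁻)` of student and teacher outputs in the toy model. -/
noncomputable def Dtoy (ξ θ θm σmin σmax : ℝ) (N i : ℕ) : ℝ :=
  (σmin / sigmaLvl σmin σmax N (i + 1)) * ξ + (1 - σmin / sigmaLvl σmin σmax N (i + 1)) * θ
    - (σmin / sigmaLvl σmin σmax N i) * ξ - (1 - σmin / sigmaLvl σmin σmax N i) * θm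

/-- The gradient `Gᴺ(θ, θ⁻)` of the toy consistency loss in `θ`. -/
noncomputable def Gtoy (ξ θ θm σmin σmax : ℝ) (N : ℕ) : ℝ :=
  (2 / ((N : ℝ) - 1)) * ∑ i ∈ Finset.Icc 1 (N - 1),
    Dtoy ξ θ θm σmin σmax N i * (1 - σmin / sigmaLvl σmin σmax N (i + 1))

/-- Equation (12) of the proof of Proposition 1, case `θ⁻ ≠ θ`: the unscaled
gradient converges to `(2(θ − θ⁻)/(σmax − σmin)) ∫_{σmin}^{σmax} (1 − σmin/σ)² dσ`,
which is nonzero. -/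
theorem unscaled_gradient_limit_teacher_ne_student (ξ θ θm σmin σmax : ℝ)
    (hne : θm ≠ θ) (h0 : 0 < σmin) (h1 : σmin < σmax) :
    Tendsto (fun N : ℕ => Gtoy ξ θ θm σmin σmax N) atTop
      (nhds (2 * (θ - θm) / (σmax - σmin) * ∫ s in σmin..σmax, (1 - σmin / s) ^ 2)) ∧
    2 * (θ - θm) / (σmax - σmin) * (∫ s in σmin..σmax, (1 - σmin / s) ^ 2) ≠ 0 := by
  have hb : (σmax - σmin) ≠ 0 := sub_ne_zero.2 h1.ne'
  constructor
  · rw [← tendsto_add_atTop_iff_nat 2]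
    have hkey : ∀ n : ℕ, Gtoy ξ θ θm σmin σmax (n+2)
        = (θ - θm) * ((2/(σmax-σmin)) * (((σmax-σmin)/((n:ℝ)+1)) * ∑ k ∈ range (n+1),
            (1 - σmin / CMaux.pt σmin σmax n k) * (1 - σmin / CMaux.pt σmin σmax n (k+1))))
          + (ξ - θ) * ((2/((n:ℝ)+1)) * ∑ k ∈ range (n+1),
            (σmin / CMaux.pt σmin σmax n (k+1) - σmin / CMaux.pt σmin σmax n k)
              * (1 - σmin / CMaux.pt σmin σmax n (k+1))) := by
      intro n
      have hM : ((n:ℝ)+1) ≠ 0 := (CMaux.npos n).ne'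
      have hsig : ∀ k : ℕ, sigmaLvl σmin σmax (n+2) (k+1) = CMaux.pt σmin σmax n k := by
        intro k
        unfold sigmaLvl CMaux.pt
        push_cast
        ring_nf
      have hc : (((n+2 : ℕ)):ℝ) - 1 = (n:ℝ)+1 := by push_cast; ring
      calc Gtoy ξ θ θm σmin σmax (n+2)
          = (2/((n:ℝ)+1)) * ∑ k ∈ range (n+1),
              ((θ - θm) * ((1 - σmin / CMaux.pt σmin σmax n k) * (1 - σmin / CMaux.pt σmin σmax n (k+1)))
               + (ξ - θ) * ((σmin / CMaux.pt σmin σmax n (k+1) - σmin / CMaux.pt σmin σmax n k)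
                  * (1 - σmin / CMaux.pt σmin σmax n (k+1)))) := by
            unfold Gtoy
            rw [hc]
            rw [show (n+2) - 1 = n+1 from rfl]
            rw [show Finset.Icc 1 (n+1) = Finset.Ico 1 (n+2) from (Finset.Ico_add_one_right_eq_Icc 1 (n+1)).symm]
            rw [Finset.sum_Ico_eq_sum_range]
            rw [show (n+2) - 1 = n+1 from rfl]
            congr 1
            apply Finset.sum_congr rfl
            intro k _
            have e1 : sigmaLvl σmin σmax (n+2) (1+k) = CMaux.pt σmin σmax n k := by
              rw [show 1+k = k+1 from by ring]; exact hsig k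
            have e2 : sigmaLvl σmin σmax (n+2) (1+k+1) = CMaux.pt σmin σmax n (k+1) := by
              rw [show 1+k+1 = (k+1)+1 from by ring]; exact hsig (k+1)
            unfold Dtoy
            rw [e1, e2]
            ring
        _ = _ := by
            rw [Finset.sum_add_distrib, ← Finset.mul_sum, ← Finset.mul_sum]
            field_simp
    simp only [hkey]
    have hmain := ((CMaux.riemann_tendsto h0 h1).const_mul (2/(σmax-σmin))).const_mul (θ - θm)
    have herr := CMaux.err_tendsto h0 h1 (ξ - θ)
    have hfin := hmain.add herr
    have heq : (θ - θm) * (2/(σmax-σmin) * (∫ s in σmin..σmax, (1 - σmin/s)^2)) + 0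
        = 2*(θ-θm)/(σmax-σmin) * ∫ s in σmin..σmax, (1 - σmin/s)^2 := by ring
    rw [heq] at hfin
    exact hfin
  · have hIpos : 0 < ∫ s in σmin..σmax, (1 - σmin/s)^2 := by
      apply intervalIntegral.intervalIntegral_pos_of_pos_on
      · exact CMaux.g_sq_intble h0 le_rfl h1.le
      · intro x hx
        have hx1 : σmin < x := hx.1
        have hx0 : 0 < x := h0.trans hx1
        have : σmin / x < 1 := (div_lt_one hx0).2 hx1
        exact pow_pos (by linarith) 2
      · exact h1
    apply mul_ne_zero
    · exact div_ne_zero (mul_ne_zero two_ne_zero (sub_ne_zero.2 (Ne.symm hne))) hb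
    · exact hIpos.ne'
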